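/- Let f be holomorphic on 𝔻 with f(az + 1 - a) = f(z) for all z ∈ 𝔻 (eigenvalue λ = 1), a ∈ (0,1), and suppose the radial limit lim_{r→1⁻} f(r) exists. Then f is constant. -/

import Mathlib

open Filter

/-- If `f ∘ φ_a = f` on 𝔻 and the radial limit of `f` at `1` exists, then `f`
is constant on 𝔻. -/
theorem eigenvalue_one_constant (a : ℝ) (ha : a ∈ Set.Ioo (0:ℝ) 1)
    (f : ℂ → ℂ)
    (hf : DifferentiableOn ℂ f (Metric.ball (0:ℂ) 1))
    (heq : ∀ z ∈ Metric.ball (0:ℂ) 1, f ((a:ℂ) * z + (1 - a)) = f z)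
    (hlim : ∃ L : ℂ, Tendsto (fun r : ℝ => f r) (nhdsWithin 1 (Set.Iio (1:ℝ))) (nhds L)) :
    ∃ c : ℂ, Set.EqOn f (fun _ => c) (Metric.ball (0:ℂ) 1) := by
  obtain ⟨L, hL⟩ := hlim
  obtain ⟨ha0, ha1⟩ := ha
  -- Step 1: f r = L for all real r ∈ (-1,1)
  have key : ∀ r : ℝ, r ∈ Set.Ioo (-1:ℝ) 1 → f r = L := by
    intro r hr
    set x : ℕ → ℝ := fun n => a ^ n * r + (1 - a ^ n) with hx
    have hxmem : ∀ n, x n ∈ Set.Ico r 1 := by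
      intro n
      have hpow0 : 0 < a ^ n := pow_pos ha0 n
      have hpow1 : a ^ n ≤ 1 := pow_le_one₀ ha0.le ha1.le
      constructor
      · have : x n - r = (1 - a ^ n) * (1 - r) := by ring
        nlinarith [hr.2]
      · have : x n - 1 = a ^ n * (r - 1) := by ring
        nlinarith [hr.2]
    have hball : ∀ n, (x n : ℂ) ∈ Metric.ball (0:ℂ) 1 := by
      intro n
      simp only [Metric.mem_ball, dist_zero_right, Complex.norm_real, Real.norm_eq_abs]
      rw [abs_lt]
      exact ⟨lt_of_lt_of_le hr.1 (hxmem n).1, (hxmem n).2⟩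
    have hfx : ∀ n, f (x n) = f r := by
      intro n
      induction n with
      | zero => simp [hx]
      | succ n ih =>
        have : ((x (n+1) : ℝ) : ℂ) = (a:ℂ) * (x n : ℝ) + (1 - a) := by
          push_cast [hx]
          ring
        rw [this, heq _ (hball n), ih]
    -- x n → 1 from below
    have hxt : Tendsto x atTop (nhdsWithin 1 (Set.Iio (1:ℝ))) := by
      apply tendsto_nhdsWithin_of_tendsto_nhds_of_eventually_within
      · have hpt : Tendsto (fun n : ℕ => a ^ n) atTop (nhds 0) :=
          tendsto_pow_atTop_nhds_zero_of_lt_one ha0.le ha1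
        have : Tendsto x atTop (nhds (0 * r + (1 - 0))) := by
          exact (hpt.mul tendsto_const_nhds).add (tendsto_const_nhds.sub hpt)
        simpa using this
      · exact Eventually.of_forall fun n => (hxmem n).2
    have : Tendsto (fun n => f (x n)) atTop (nhds L) := hL.comp hxt
    rw [show (fun n => f (x n)) = fun _ => f r from funext hfx] at this
    exact tendsto_nhds_unique tendsto_const_nhds this
  -- Step 2: identity theorem
  refine ⟨L, ?_⟩
  have hfa : AnalyticOnNhd ℂ f (Metric.ball (0:ℂ) 1) :=
    hf.analyticOnNhd Metric.isOpen_ball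
  have hga : AnalyticOnNhd ℂ (fun _ => L) (Metric.ball (0:ℂ) 1) :=
    analyticOnNhd_const
  have hconn : IsPreconnected (Metric.ball (0:ℂ) 1) :=
    (convex_ball _ _).isPreconnected
  have h0 : (0:ℂ) ∈ Metric.ball (0:ℂ) 1 := by simp
  apply hfa.eqOn_of_preconnected_of_frequently_eq hga hconn h0
  -- frequently equal near 0 within ≠ 0
  have hseq : Tendsto (fun n : ℕ => ((1 / (n + 2) : ℝ) : ℂ)) atTop
      (nhdsWithin 0 {(0:ℂ)}ᶜ) := by
    apply tendsto_nhdsWithin_of_tendsto_nhds_of_eventually_within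
    · have : Tendsto (fun n : ℕ => (1 / (n + 2) : ℝ)) atTop (nhds 0) := by
        have h := (tendsto_atTop_add_const_right atTop (2:ℝ)
          tendsto_natCast_atTop_atTop).inv_tendsto_atTop
        simp only [one_div]; exact h
      exact (Complex.continuous_ofReal.tendsto 0).comp this
    · apply Eventually.of_forall
      intro n
      simp only [Set.mem_compl_iff, Set.mem_singleton_iff]
      intro h
      have : (1 / (n + 2) : ℝ) = 0 := by exact_mod_cast h
      have h2 : (0:ℝ) < (n:ℝ) + 2 := by positivity
      rw [div_eq_zero_iff] at this
      rcases this with h | h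
      · norm_num at h
      · linarith
  apply hseq.frequently
  apply Eventually.frequently
  apply Eventually.of_forall
  intro n
  have h2 : (0:ℝ) < (n:ℝ) + 2 := by positivity
  have hmem : (1 / (n + 2) : ℝ) ∈ Set.Ioo (-1:ℝ) 1 := by
    have hp : (0:ℝ) < 1 / ((n:ℝ) + 2) := by positivity
    constructor
    · linarith
    · rw [div_lt_one h2]; linarith
  exact key _ hmem
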